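/- Let p ∈ (0,1), E a nonempty finite set, and G : E → {0,1}. Then Σ_{∅ ≠ E' ⊆ E} (√(p/(1-p)))^{|E'|} χ_{E'}(G) equals the average over all linear orderings of E of Σ_{e∈E} √(p/(1-p)) · χ(G(e)) · ∏_{e' > e} (1/(1-p))·(1-G(e')), which equals Σ_{e∈E} √(p/(1-p)) χ(G(e)) · Σ_{E' ⊆ E∖{e}} [1/(|E|·binom(|E|-1,|E'|))] · (1/(1-p))^{|E'|} · ∏_{e'∈E'}(1-G(e')). -/

import Mathlib

open Finset

noncomputable def chi (p : ℝ) : Fin 2 → ℝ := fun e =>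
  if e = 0 then Real.sqrt (p / (1 - p)) else -Real.sqrt ((1 - p) / p)

lemma bin_id (n j : ℕ) (hj : j < n) :
    ∑ t ∈ Finset.range (n - j),
      ((n - 1 - j).choose t : ℝ) * (1 / ((n : ℝ) * ((n - 1).choose (j + t)))) =
    1 / ((j : ℝ) + 1) := by
  have hn : 0 < n := Nat.pos_of_ne_zero (by omega)
  have hjn1 : j ≤ n - 1 := Nat.le_sub_one_of_lt hj
  have hstep : ∀ t ∈ Finset.range (n - j),
      ((n - 1 - j).choose t : ℝ) * (1 / ((n : ℝ) * ((n - 1).choose (j + t)))) =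
      ((j + t).choose j : ℝ) / ((n : ℝ) * ((n - 1).choose j)) := by
    intro t ht
    have ht' : t ≤ n - 1 - j := by
      have := Finset.mem_range.1 ht
      omega
    have hjt : j + t ≤ n - 1 := by omega
    have h1 : (0:ℝ) < ((n - 1).choose (j + t)) := by
      exact_mod_cast Nat.choose_pos hjt
    have h2 : (0:ℝ) < ((n - 1).choose j) := by
      exact_mod_cast Nat.choose_pos hjn1
    have hkey : (n - 1).choose (j + t) * (j + t).choose j
        = (n - 1).choose j * (n - 1 - j).choose t := by
      have := Nat.choose_mul (n := n - 1) (k := j + t) (s := j) (Nat.le_add_right _ _)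
      simpa [Nat.add_sub_cancel_left] using this
    have hn' : (0:ℝ) < (n : ℝ) := by exact_mod_cast hn
    have hkeyR : ((n - 1).choose (j + t) : ℝ) * ((j + t).choose j)
        = ((n - 1).choose j : ℝ) * ((n - 1 - j).choose t) := by exact_mod_cast hkey
    field_simp
    nlinarith [hkeyR]
  rw [Finset.sum_congr rfl hstep, ← Finset.sum_div]
  have hrange : n - j = n - 1 - j + 1 := by omega
  have hsum : ∑ t ∈ Finset.range (n - j), ((j + t).choose j : ℝ)
      = (n.choose (j + 1) : ℝ) := by
    rw [hrange]
    have := Nat.sum_range_add_choose (n - 1 - j) j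
    have h2 : n - 1 - j + j + 1 = n := by omega
    rw [h2] at this
    exact_mod_cast congrArg (Nat.cast (R := ℝ)) (by simpa [add_comm] using this)
  rw [hsum]
  have hmul : (n : ℝ) * ((n - 1).choose j) = (n.choose (j + 1) : ℝ) * ((j : ℝ) + 1) := by
    have := Nat.add_one_mul_choose_eq (n - 1) j
    have h2 : n - 1 + 1 = n := by omega
    rw [h2] at this
    exact_mod_cast this
  have hch : (0:ℝ) < (n.choose (j+1) : ℝ) := by exact_mod_cast Nat.choose_pos hj
  rw [hmul]
  field_simp

lemma swap_powerset {α : Type*} [DecidableEq α] (A : Finset α) (F : Finset α → Finset α → ℝ) :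
    ∑ B ∈ A.powerset, ∑ S ∈ B.powerset, F S B
      = ∑ S ∈ A.powerset, ∑ T ∈ (A \ S).powerset, F S (S ∪ T) := by
  rw [Finset.sum_sigma', Finset.sum_sigma']
  refine Finset.sum_bij' (fun x _ => ⟨x.2, x.1 \ x.2⟩) (fun x _ => ⟨x.1 ∪ x.2, x.1⟩) ?_ ?_ ?_ ?_ ?_
  · rintro ⟨B, S⟩ h
    simp only [Finset.mem_sigma, Finset.mem_powerset] at h ⊢
    exact ⟨h.2.trans h.1, sdiff_subset_sdiff h.1 le_rfl⟩
  · rintro ⟨S, T⟩ h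
    simp only [Finset.mem_sigma, Finset.mem_powerset] at h ⊢
    constructor
    · exact Finset.union_subset h.1 (h.2.trans (Finset.sdiff_subset))
    · exact Finset.subset_union_left
  · rintro ⟨B, S⟩ h
    simp only [Finset.mem_sigma, Finset.mem_powerset] at h
    simp [Finset.union_sdiff_of_subset h.2]
  · rintro ⟨S, T⟩ h
    simp only [Finset.mem_sigma, Finset.mem_powerset] at h
    have hd : Disjoint S T := Finset.disjoint_of_subset_right h.2 (Finset.disjoint_sdiff)
    simp [Finset.union_sdiff_cancel_left hd]
  · rintro ⟨B, S⟩ h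
    simp only [Finset.mem_sigma, Finset.mem_powerset] at h
    simp [Finset.union_sdiff_of_subset h.2]

lemma pair_sum {α : Type*} [DecidableEq α] (E : Finset α) (g : Finset α → ℝ) :
    ∑ e ∈ E, ∑ S ∈ (E.erase e).powerset, (1 / ((S.card : ℝ) + 1)) * g (insert e S)
      = ∑ F ∈ E.powerset.filter (fun F => F ≠ ∅), g F := by
  have hrhs : ∑ F ∈ E.powerset.filter (fun F => F ≠ ∅), g F
      = ∑ F ∈ E.powerset.filter (fun F => F ≠ ∅), ∑ _e ∈ F, (1 / (F.card : ℝ)) * g F := by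
    refine Finset.sum_congr rfl fun F hF => ?_
    simp only [Finset.mem_filter, Finset.mem_powerset] at hF
    rw [Finset.sum_const, nsmul_eq_mul]
    have : (F.card : ℝ) ≠ 0 := by
      exact_mod_cast Finset.card_ne_zero.2 (Finset.nonempty_iff_ne_empty.2 hF.2)
    field_simp
  rw [hrhs, Finset.sum_sigma', Finset.sum_sigma']
  refine Finset.sum_bij' (fun x _ => ⟨insert x.1 x.2, x.1⟩) (fun x _ => ⟨x.2, x.1.erase x.2⟩)
    ?_ ?_ ?_ ?_ ?_
  · rintro ⟨e, S⟩ h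
    simp only [Finset.mem_sigma, Finset.mem_powerset, Finset.mem_filter] at h ⊢
    refine ⟨⟨Finset.insert_subset h.1 (h.2.trans (Finset.erase_subset _ _)), by simp⟩,
      Finset.mem_insert_self _ _⟩
  · rintro ⟨F, e⟩ h
    simp only [Finset.mem_sigma, Finset.mem_powerset, Finset.mem_filter] at h ⊢
    exact ⟨h.1.1 h.2, Finset.erase_subset_erase _ h.1.1⟩
  · rintro ⟨e, S⟩ h
    simp only [Finset.mem_sigma, Finset.mem_powerset] at h
    have he : e ∉ S := fun hc => Finset.notMem_erase e E (h.2 hc)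
    simp [Finset.erase_insert he]
  · rintro ⟨F, e⟩ h
    simp only [Finset.mem_sigma, Finset.mem_powerset, Finset.mem_filter] at h
    simp [Finset.insert_erase h.2]
  · rintro ⟨e, S⟩ h
    simp only [Finset.mem_sigma, Finset.mem_powerset] at h
    have he : e ∉ S := fun hc => Finset.notMem_erase e E (h.2 hc)
    simp [Finset.card_insert_of_notMem he]

set_option maxHeartbeats 1000000 in
theorem stmt7 {ι : Type*} [DecidableEq ι] (p : ℝ) (hp0 : 0 < p) (hp1 : p < 1)
    (E : Finset ι) (hE : E.Nonempty) (G : ι → Fin 2) :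
    ∑ E' ∈ E.powerset.filter (fun E' => E' ≠ ∅),
        Real.sqrt (p / (1 - p)) ^ E'.card * ∏ e ∈ E', chi p (G e)
      = ∑ e ∈ E, Real.sqrt (p / (1 - p)) * chi p (G e) *
          ∑ E' ∈ (E.erase e).powerset,
            (1 / ((E.card : ℝ) * ((E.card - 1).choose E'.card))) *
              (1 / (1 - p)) ^ E'.card * ∏ e' ∈ E', (1 - ((G e').val : ℝ)) := by
  have h1p : (0:ℝ) < 1 - p := by linarith
  set s := Real.sqrt (p / (1 - p)) with hs
  have hkey : ∀ x : Fin 2, (1 / (1 - p)) * (1 - (x.val : ℝ)) = 1 + s * chi p x := by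
    intro x
    have hsq : s * s = p / (1 - p) := Real.mul_self_sqrt (by positivity)
    have hx : x = 0 ∨ x = 1 := by omega
    rcases hx with rfl | rfl
    · have h0 : chi p (0 : Fin 2) = s := by simp [chi, hs]
      rw [h0]
      simp only [Fin.val_zero, Nat.cast_zero, sub_zero, mul_one]
      rw [hsq]
      field_simp
      ring
    · have hone : s * Real.sqrt ((1-p)/p) = 1 := by
        rw [hs, ← Real.sqrt_mul (by positivity), show (p/(1-p)) * ((1-p)/p) = 1 by field_simp]
        exact Real.sqrt_one
      have h1 : chi p (1 : Fin 2) = -Real.sqrt ((1-p)/p) := by simp [chi]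
      rw [h1]
      simp only [Fin.val_one, Nat.cast_one, sub_self, mul_zero]
      rw [mul_neg, hone]
      ring
  have hn : 0 < E.card := Finset.card_pos.2 hE
  have inner_eq : ∀ e ∈ E,
      (∑ E' ∈ (E.erase e).powerset,
        (1 / ((E.card : ℝ) * ((E.card - 1).choose E'.card))) *
          (1 / (1 - p)) ^ E'.card * ∏ e' ∈ E', (1 - ((G e').val : ℝ)))
      = ∑ S ∈ (E.erase e).powerset,
          (1 / ((S.card : ℝ) + 1)) * ∏ f ∈ S, (s * chi p (G f)) := by
    intro e he
    have hA : (E.erase e).card = E.card - 1 := Finset.card_erase_of_mem he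
    have c1 : ∀ E' ∈ (E.erase e).powerset,
        (1 / ((E.card : ℝ) * ((E.card - 1).choose E'.card))) * (1 / (1 - p)) ^ E'.card *
          ∏ e' ∈ E', (1 - ((G e').val : ℝ))
        = ∑ S ∈ E'.powerset,
            (1 / ((E.card : ℝ) * ((E.card - 1).choose E'.card))) *
              ∏ f ∈ S, (s * chi p (G f)) := by
      intro E' _
      rw [mul_assoc, ← Finset.prod_const, ← Finset.prod_mul_distrib]
      have : ∏ e' ∈ E', ((1 / (1 - p)) * (1 - ((G e').val : ℝ)))
          = ∑ S ∈ E'.powerset, ∏ f ∈ S, (s * chi p (G f)) := by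
        rw [Finset.prod_congr rfl (fun e' _ => hkey (G e'))]
        have := Finset.prod_add (fun e' => s * chi p (G e')) (fun _ => (1:ℝ)) E'
        simp only [Finset.prod_const_one, mul_one] at this
        rw [← this]
        exact Finset.prod_congr rfl fun _ _ => by ring
      rw [this, Finset.mul_sum]
    rw [Finset.sum_congr rfl c1,
      swap_powerset (E.erase e)
        (fun S B => (1 / ((E.card : ℝ) * ((E.card - 1).choose B.card))) *
          ∏ f ∈ S, (s * chi p (G f)))]
    refine Finset.sum_congr rfl fun S hS => ?_
    rw [Finset.mem_powerset] at hS
    have hj : S.card ≤ E.card - 1 := hA ▸ Finset.card_le_card hS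
    have hjlt : S.card < E.card := by omega
    have hB : (E.erase e \ S).card = E.card - 1 - S.card := by
      rw [Finset.card_sdiff_of_subset hS, hA]
    have hcardU : ∀ T ∈ (E.erase e \ S).powerset, (S ∪ T).card = S.card + T.card := by
      intro T hT
      rw [Finset.mem_powerset] at hT
      exact Finset.card_union_of_disjoint
        (Finset.disjoint_of_subset_right hT Finset.disjoint_sdiff)
    calc ∑ T ∈ (E.erase e \ S).powerset,
          (1 / ((E.card : ℝ) * ((E.card - 1).choose (S ∪ T).card))) *
            ∏ f ∈ S, (s * chi p (G f))
        = (∑ T ∈ (E.erase e \ S).powerset,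
            (1 / ((E.card : ℝ) * ((E.card - 1).choose (S.card + T.card))))) *
            ∏ f ∈ S, (s * chi p (G f)) := by
          rw [Finset.sum_mul]
          exact Finset.sum_congr rfl fun T hT => by rw [hcardU T hT]
      _ = (1 / ((S.card : ℝ) + 1)) * ∏ f ∈ S, (s * chi p (G f)) := by
          congr 1
          rw [Finset.sum_powerset]
          have hrange : (E.erase e \ S).card + 1 = E.card - S.card := by omega
          rw [hrange]
          have hterm : ∀ t ∈ Finset.range (E.card - S.card),
              (∑ T ∈ Finset.powersetCard t (E.erase e \ S),
                (1 / ((E.card : ℝ) * ((E.card - 1).choose (S.card + T.card)))))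
              = ((E.card - 1 - S.card).choose t : ℝ) *
                  (1 / ((E.card : ℝ) * ((E.card - 1).choose (S.card + t)))) := by
            intro t _
            rw [Finset.sum_congr rfl (fun T hT => by
              rw [(Finset.mem_powersetCard.1 hT).2]), Finset.sum_const, nsmul_eq_mul,
              Finset.card_powersetCard, hB]
          rw [Finset.sum_congr rfl hterm]
          exact bin_id E.card S.card hjlt
  have step1 : ∑ e ∈ E, s * chi p (G e) *
        (∑ E' ∈ (E.erase e).powerset,
          (1 / ((E.card : ℝ) * ((E.card - 1).choose E'.card))) *
            (1 / (1 - p)) ^ E'.card * ∏ e' ∈ E', (1 - ((G e').val : ℝ)))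
      = ∑ e ∈ E, ∑ S ∈ (E.erase e).powerset,
          (1 / ((S.card : ℝ) + 1)) * ∏ f ∈ insert e S, (s * chi p (G f)) := by
    refine Finset.sum_congr rfl fun e he => ?_
    rw [inner_eq e he, Finset.mul_sum]
    refine Finset.sum_congr rfl fun S hS => ?_
    rw [Finset.mem_powerset] at hS
    have heS : e ∉ S := fun hc => Finset.notMem_erase e E (hS hc)
    rw [Finset.prod_insert heS]
    ring
  have step2 := pair_sum E (fun F => ∏ f ∈ F, (s * chi p (G f)))
  have step3 : ∑ F ∈ E.powerset.filter (fun F => F ≠ ∅), ∏ f ∈ F, (s * chi p (G f))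
      = ∑ E' ∈ E.powerset.filter (fun E' => E' ≠ ∅), s ^ E'.card * ∏ e ∈ E', chi p (G e) := by
    refine Finset.sum_congr rfl fun F _ => ?_
    rw [Finset.prod_mul_distrib, Finset.prod_const]
  rw [step1, step2, step3]
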